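/- The Kubo-Mori bilinear form G_D(X,Y) = ∫_0^∞ Tr((D+tI)^{-1} X (D+tI)^{-1} Y) dt on real symmetric matrices is symmetric in X and Y, and is positive definite: G_D(X,X) > 0 for X ≠ 0. -/

import Mathlib

open MeasureTheory Matrix Set

lemma aux_integrable_sq {m : ℝ} (hm : 0 < m) :
    IntegrableOn (fun t : ℝ => ((m + t) ^ 2)⁻¹) (Set.Ioi (0:ℝ)) := by
  have hderiv : ∀ x ∈ Set.Ici (0:ℝ),
      HasDerivAt (fun t : ℝ => -(m + t)⁻¹) (((m + x) ^ 2)⁻¹) x := by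
    intro x hx
    have h0 : m + x ≠ 0 := by
      have : (0:ℝ) ≤ x := hx
      positivity
    have h := (((hasDerivAt_id x).const_add m).inv h0).neg
    convert h using 1
    · rfl
    · rfl
    · rfl
    · simp [div_eq_mul_inv]
  refine integrableOn_Ioi_deriv_of_nonneg' (l := 0) hderiv (fun x hx => by positivity) ?_
  have h1 : Filter.Tendsto (fun t : ℝ => (m + t)⁻¹) Filter.atTop (nhds 0) :=
    Filter.Tendsto.inv_tendsto_atTop (Filter.tendsto_atTop_add_const_left _ m Filter.tendsto_id)
  simpa using h1.neg

lemma term_integrable {a b : ℝ} (ha : 0 < a) (hb : 0 < b) :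
    IntegrableOn (fun t : ℝ => (a + t)⁻¹ * (b + t)⁻¹) (Set.Ioi (0:ℝ)) := by
  have hm : 0 < min a b := lt_min ha hb
  refine (aux_integrable_sq hm).mono' ?_ ?_
  · refine ContinuousOn.aestronglyMeasurable ?_ measurableSet_Ioi
    have h1 : ContinuousOn (fun t : ℝ => (a + t)⁻¹) (Set.Ioi 0) := by
      refine ContinuousOn.inv₀ (by fun_prop) fun x hx => ?_
      have : (0:ℝ) < x := hx
      positivity
    have h2 : ContinuousOn (fun t : ℝ => (b + t)⁻¹) (Set.Ioi 0) := by
      refine ContinuousOn.inv₀ (by fun_prop) fun x hx => ?_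
      have : (0:ℝ) < x := hx
      positivity
    exact h1.mul h2
  · filter_upwards [ae_restrict_mem measurableSet_Ioi] with t ht
    have ht' : (0:ℝ) < t := ht
    have hma : min a b + t ≤ a + t := by
      have := min_le_left a b; linarith
    have hmb : min a b + t ≤ b + t := by
      have := min_le_right a b; linarith
    have hmt : 0 < min a b + t := by positivity
    have h1 : (a + t)⁻¹ ≤ (min a b + t)⁻¹ := by
      apply inv_anti₀ hmt hma
    have h2 : (b + t)⁻¹ ≤ (min a b + t)⁻¹ := by
      apply inv_anti₀ hmt hmb
    have hpos1 : (0:ℝ) ≤ (a + t)⁻¹ := by positivity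
    have hpos2 : (0:ℝ) ≤ (b + t)⁻¹ := by positivity
    rw [Real.norm_eq_abs, abs_of_nonneg (mul_nonneg hpos1 hpos2), sq, mul_inv]
    exact mul_le_mul h1 h2 hpos2 (by positivity)

/-- The Kubo-Mori bilinear form on real symmetric matrices. -/
noncomputable def kuboMori (n : ℕ) (D X Y : Matrix (Fin n) (Fin n) ℝ) : ℝ :=
  ∫ t in Set.Ioi (0:ℝ), Matrix.trace ((D + t • 1)⁻¹ * X * (D + t • 1)⁻¹ * Y)

/-- The Kubo-Mori form is symmetric in `X` and `Y` on symmetric matrices,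
and positive definite: `G_D(X,X) > 0` for symmetric `X ≠ 0`. -/
theorem kuboMori_symm_posDef (n : ℕ) (D : Matrix (Fin n) (Fin n) ℝ) (hD : D.PosDef) :
    (∀ X Y : Matrix (Fin n) (Fin n) ℝ, X.IsSymm → Y.IsSymm →
      kuboMori n D X Y = kuboMori n D Y X) ∧
    (∀ X : Matrix (Fin n) (Fin n) ℝ, X.IsSymm → X ≠ 0 → 0 < kuboMori n D X X) := by
  have hH : D.IsHermitian := hD.1
  set V : Matrix (Fin n) (Fin n) ℝ := (hH.eigenvectorUnitary : Matrix (Fin n) (Fin n) ℝ) with hVdef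
  have hVsV : V * star V = 1 := Matrix.mem_unitaryGroup_iff.mp hH.eigenvectorUnitary.2
  have hsVV : star V * V = 1 := Matrix.mem_unitaryGroup_iff'.mp hH.eigenvectorUnitary.2
  set μ : Fin n → ℝ := hH.eigenvalues with hμdef
  have hμ : ∀ i, 0 < μ i := fun i => hD.eigenvalues_pos i
  have hspec : D = V * Matrix.diagonal μ * star V := by
    have := hH.spectral_theorem
    simpa [Function.comp] using this
  -- key inverse formula
  have key : ∀ t : ℝ, 0 < t →
      (D + t • (1 : Matrix (Fin n) (Fin n) ℝ))⁻¹
        = V * Matrix.diagonal (fun i => (μ i + t)⁻¹) * star V := by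
    intro t ht
    have hne : ∀ i, μ i + t ≠ 0 := fun i => by have := hμ i; positivity
    apply Matrix.inv_eq_right_inv
    have h1 : D + t • (1 : Matrix (Fin n) (Fin n) ℝ)
        = V * Matrix.diagonal (fun i => μ i + t) * star V := by
      have ht1 : t • (1 : Matrix (Fin n) (Fin n) ℝ)
          = V * Matrix.diagonal (fun _ => t) * star V := by
        rw [← Matrix.smul_one_eq_diagonal]
        rw [mul_smul_comm, smul_mul_assoc, mul_one, hVsV]
      conv_lhs => rw [hspec, ht1]
      rw [← add_mul, ← mul_add, Matrix.diagonal_add]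
    rw [h1]
    simp only [mul_assoc]
    rw [← mul_assoc (star V) V, hsVV, one_mul,
      ← mul_assoc (Matrix.diagonal fun i => μ i + t) (Matrix.diagonal fun i => (μ i + t)⁻¹) (star V),
      Matrix.diagonal_mul_diagonal]
    have : (fun i => (μ i + t) * (μ i + t)⁻¹) = fun _ => (1:ℝ) := by
      funext i; exact mul_inv_cancel₀ (hne i)
    rw [this, Matrix.diagonal_one, one_mul, hVsV]
  constructor
  · intro X Y _ _
    unfold kuboMori
    have h : ∀ t : ℝ,
        Matrix.trace ((D + t • 1)⁻¹ * X * (D + t • 1)⁻¹ * Y)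
          = Matrix.trace ((D + t • 1)⁻¹ * Y * (D + t • 1)⁻¹ * X) := by
      intro t
      rw [mul_assoc ((D + t • 1)⁻¹ * X), Matrix.trace_mul_comm, ← mul_assoc]
    simp only [h]
  · intro X hX hXne
    set Y : Matrix (Fin n) (Fin n) ℝ := star V * X * V with hYdef
    have hstar : star V = Vᵀ :=
      (Matrix.star_eq_conjTranspose V).trans (Matrix.conjTranspose_eq_transpose_of_trivial V)
    have hYsymm : Yᵀ = Y := by
      rw [hYdef, hstar]
      simp [Matrix.transpose_mul, Matrix.transpose_transpose, hX.eq, Matrix.mul_assoc]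
    have hXeq : V * Y * star V = X := by
      rw [hYdef]
      simp only [← mul_assoc, hVsV, one_mul]
      rw [mul_assoc, hVsV, mul_one]
    have hYne : Y ≠ 0 := by
      intro h0
      apply hXne
      rw [← hXeq, h0, mul_zero, zero_mul]
    obtain ⟨i₀, j₀, hij⟩ : ∃ i j, Y i j ≠ 0 := by
      by_contra h
      push_neg at h
      exact hYne (Matrix.ext fun i j => h i j)
    -- trace formula
    have trace_eq : ∀ t : ℝ, 0 < t →
        Matrix.trace ((D + t • 1)⁻¹ * X * (D + t • 1)⁻¹ * X)
          = ∑ i, ∑ j, (Y i j) ^ 2 * ((μ i + t)⁻¹ * (μ j + t)⁻¹) := by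
      intro t ht
      rw [key t ht]
      set E : Matrix (Fin n) (Fin n) ℝ := Matrix.diagonal (fun i => (μ i + t)⁻¹) with hE
      have hconj : V * E * star V * X * (V * E * star V) * X
          = V * (E * Y * E * Y) * star V := by
        simp only [hYdef, mul_assoc, hVsV, mul_one]
      rw [hconj, Matrix.trace_mul_comm, ← mul_assoc, hsVV, one_mul]
      rw [Matrix.trace]
      refine Finset.sum_congr rfl fun i _ => ?_
      rw [Matrix.diag_apply, Matrix.mul_apply]
      refine Finset.sum_congr rfl fun j _ => ?_
      rw [Matrix.mul_diagonal, Matrix.diagonal_mul]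
      have hYji : Y j i = Y i j := by
        conv_lhs => rw [← hYsymm]
        rw [Matrix.transpose_apply]
      rw [hYji]; ring
    -- integrability
    have hInt : IntegrableOn
        (fun t => Matrix.trace ((D + t • 1)⁻¹ * X * (D + t • 1)⁻¹ * X)) (Set.Ioi (0:ℝ)) := by
      have hS : IntegrableOn
          (fun t => ∑ i, ∑ j, (Y i j) ^ 2 * ((μ i + t)⁻¹ * (μ j + t)⁻¹)) (Set.Ioi (0:ℝ)) := by
        apply MeasureTheory.integrable_finset_sum
        intro i _
        apply MeasureTheory.integrable_finset_sum
        intro j _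
        exact ((term_integrable (hμ i) (hμ j)).const_mul _)
      exact hS.congr_fun (fun t ht => (trace_eq t ht).symm) measurableSet_Ioi
    -- positivity
    unfold kuboMori
    rw [setIntegral_pos_iff_support_of_nonneg_ae ?_ hInt]
    · have hsub : Set.Ioi (0:ℝ) ⊆
          Function.support (fun t => Matrix.trace ((D + t • 1)⁻¹ * X * (D + t • 1)⁻¹ * X)) := by
        intro t ht
        have ht' : (0:ℝ) < t := ht
        have hpos : 0 < ∑ i, ∑ j, (Y i j) ^ 2 * ((μ i + t)⁻¹ * (μ j + t)⁻¹) := by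
          refine Finset.sum_pos' (fun i _ => Finset.sum_nonneg fun j _ => ?_) ⟨i₀, Finset.mem_univ _, ?_⟩
          · have h1 := hμ i; have h2 := hμ j
            positivity
          · refine Finset.sum_pos' (fun j _ => ?_) ⟨j₀, Finset.mem_univ _, ?_⟩
            · have h1 := hμ i₀; have h2 := hμ j
              positivity
            · have h1 := hμ i₀; have h2 := hμ j₀
              have : Y i₀ j₀ ^ 2 > 0 := by positivity
              positivity
        simp only [Function.mem_support]
        rw [trace_eq t ht']
        exact hpos.ne'
      rw [Set.inter_eq_self_of_subset_right hsub]
      simp [Real.volume_Ioi]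
    · filter_upwards [ae_restrict_mem measurableSet_Ioi] with t ht
      have ht' : (0:ℝ) < t := ht
      rw [trace_eq t ht']
      refine Finset.sum_nonneg fun i _ => Finset.sum_nonneg fun j _ => ?_
      have h1 := hμ i; have h2 := hμ j
      positivity
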